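/- There exists L such that whenever l₁ ≥ L in the Marker variant, μ-almost every x ∈ X satisfies ⌊t_{j+1}(x)/l_j⌋ + 1 ∉ P_j for all sufficiently large j, where t_{j+1}(x) ∈ {0, …, l_{j+1}−1} is the unique offset with x_{m·l_{j+1} − t_{j+1}(x)} ⋯ x_{(m+1)·l_{j+1} − t_{j+1}(x) − 1} ∈ C_{j+1} for all m ∈ ℤ; that is, for almost every x the C_j-block containing coordinate 0 is unpermuted for all large j. -/

import Mathlib

open Filter MeasureTheory Topology

namespace EntDim

/-- The left shift `σ` on `A^ℤ`: `(shift x) i = x (i + 1)`. -/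
def shift {A : Type*} (x : ℤ → A) : ℤ → A := fun i => x (i + 1)

/-- The shift by an integer `k`: `(shiftZ k x) i = x (i + k)`, i.e. `σ^k`. -/
def shiftZ {A : Type*} (k : ℤ) (x : ℤ → A) : ℤ → A := fun i => x (i + k)

/-- A subshift: a nonempty closed shift-invariant subset of `A^ℤ`. -/
def IsSubshift {A : Type*} [TopologicalSpace A] (X : Set (ℤ → A)) : Prop :=
  X.Nonempty ∧ IsClosed X ∧ shift '' X = X

/-- `B_n(X)`: the set of words of length `n` occurring in `X`. -/
def wordsOf {A : Type*} (X : Set (ℤ → A)) (n : ℕ) : Set (Fin n → A) :=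
  { w | ∃ x ∈ X, ∀ i : Fin n, w i = x ((i : ℕ) : ℤ) }

/-- `X` is minimal: every orbit is dense in `X`. -/
def IsMinimal {A : Type*} [TopologicalSpace A] (X : Set (ℤ → A)) : Prop :=
  ∀ x ∈ X, X ⊆ closure { z | ∃ k : ℤ, z = shiftZ k x }

/-- `μ` is a shift-invariant Borel probability measure carried by `X`. -/
def IsInvProbOn {A : Type*} [MeasurableSpace A] (μ : Measure (ℤ → A))
    (X : Set (ℤ → A)) : Prop :=
  IsProbabilityMeasure μ ∧ MeasurePreserving shift μ μ ∧ μ X = 1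

/-- The cylinder `[u] = {x ∈ X : x_i = u_i for 0 ≤ i < |u|}` of a finite word `u`. -/
def cylW {A : Type*} (X : Set (ℤ → A)) (u : List A) : Set (ℤ → A) :=
  { x | x ∈ X ∧ ∀ i : Fin u.length, x ((i : ℕ) : ℤ) = u.get i }

/-- The `n`-cylinder `P_n(x) = {y ∈ X : y_i = x_i for 0 ≤ i < n}` of a point `x`. -/
def cylPt {A : Type*} (X : Set (ℤ → A)) (x : ℤ → A) (n : ℕ) : Set (ℤ → A) :=
  { y | y ∈ X ∧ ∀ i : ℕ, i < n → y (i : ℤ) = x (i : ℤ) }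

/-- The first return time `R_n(x) = inf {k ≥ 1 : x_{k+i} = x_i for 0 ≤ i < n}`
(with the junk value `0` if no such `k` exists). -/
noncomputable def retTime {A : Type*} (x : ℤ → A) (n : ℕ) : ℕ :=
  sInf { k : ℕ | 1 ≤ k ∧ ∀ i : ℕ, i < n → x ((k : ℤ) + (i : ℕ)) = x ((i : ℕ) : ℤ) }

/-- The sequence of pairs `(l_j, N_j)`, `j ≥ 1`, with `l_1 = l1`, `N_1 = 2^⌊√l1⌋`,
`l_{j+1} = l_j · N_j` and `N_{j+1} = (⌊√N_j⌋)!`.  (The value at `j = 0` is junk.) -/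
def lN (l1 : ℕ) : ℕ → ℕ × ℕ
  | 0 => (0, 0)
  | 1 => (l1, 2 ^ Nat.sqrt l1)
  | j + 2 => ((lN l1 (j + 1)).1 * (lN l1 (j + 1)).2, Nat.factorial (Nat.sqrt (lN l1 (j + 1)).2))

/-- The length `l_j` of the words of `C_j`. -/
def lseq (l1 j : ℕ) : ℕ := (lN l1 j).1

/-- The cardinality `N_j` of `C_j`. -/
def Nseq (l1 j : ℕ) : ℕ := (lN l1 j).2

/-- `i ∈ P_j = {2} ∪ {m² : 2 ≤ m ≤ ⌊√N⌋}` (1-based position `i`, where `N = N_j`):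
the permuted (unstable) positions. -/
def PermutedIdx (N i : ℕ) : Prop :=
  i = 2 ∨ ∃ m : ℕ, 2 ≤ m ∧ m ≤ Nat.sqrt N ∧ i = m ^ 2

/-- The data of the Construction: a positive integer `l1` and ordered lists
`C j` (`j ≥ 1`) of distinct binary words (`C 0` is irrelevant), where `C 1` consists of
`N_1 = 2^⌊√l1⌋` words of length `l1`, `C j` consists of `N_j` words of length `l_j`, and
`C (j+1)` is the set of all concatenations of the words of `C j` reordered by a
permutation preserving `P_j` and fixing every position outside `P_j`. -/
structure Construction where
  l1 : ℕ
  hl1 : 0 < l1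
  C : ℕ → List (List Bool)
  nodup : ∀ j, 1 ≤ j → (C j).Nodup
  length_eq : ∀ j, 1 ≤ j → (C j).length = Nseq l1 j
  wordLength : ∀ j, 1 ≤ j → ∀ w ∈ C j, w.length = lseq l1 j
  mem_succ : ∀ j, 1 ≤ j → ∀ w : List Bool,
    w ∈ C (j + 1) ↔
      ∃ τ : Equiv.Perm (Fin (C j).length),
        (∀ i : Fin (C j).length, ¬ PermutedIdx (Nseq l1 j) ((i : ℕ) + 1) → τ i = i) ∧
        (∀ i : Fin (C j).length, PermutedIdx (Nseq l1 j) ((i : ℕ) + 1) →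
            PermutedIdx (Nseq l1 j) ((τ i : ℕ) + 1)) ∧
        w = (List.ofFn fun i : Fin (C j).length => (C j).get (τ i)).flatten

/-- The subshift `X` of the Construction: all `x ∈ {0,1}^ℤ` each of whose finite
subwords occurs as a subword of some word in some `C j`. -/
def Construction.space (c : Construction) : Set (ℤ → Bool) :=
  { x | ∀ (a : ℤ) (n : ℕ), ∃ j, 1 ≤ j ∧ ∃ w ∈ c.C j,
      (List.ofFn fun i : Fin n => x (a + (i : ℕ))) <:+: w }

/-- The offset `t_j(x) ∈ {0, …, l_j − 1}` of the decomposition of `x` into `C j`-words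
(defined as an infimum; it is unique in the Marker variant). -/
noncomputable def Construction.tOffset (c : Construction) (j : ℕ) (x : ℤ → Bool) : ℕ :=
  sInf { t : ℕ | t < lseq c.l1 j ∧ ∀ m : ℤ,
    (List.ofFn fun i : Fin (lseq c.l1 j) =>
      x (m * (lseq c.l1 j : ℤ) - (t : ℤ) + (i : ℕ))) ∈ c.C j }

/-- The Marker variant: every word of `C 1` begins with `001`, and `00` occurs in each
word of `C 1` only as its prefix. -/
structure MarkerConstruction extends Construction where
  marker_prefix : ∀ w ∈ C 1, [false, false, true] <+: w
  marker_unique : ∀ w ∈ C 1, ∀ n : ℕ, [false, false] <+: w.drop n → n = 0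


lemma getElem_idx_congr (L : List Bool) {i j : ℕ} (h : i = j) (hi : i < L.length) :
    L[i] = L[j]'(h ▸ hi) := by subst h; rfl

/-- The finite word of `x` starting at `a`, of length `n`. -/
def word (x : ℤ → Bool) (a : ℤ) (n : ℕ) : List Bool :=
  List.ofFn fun i : Fin n => x (a + (i : ℕ))

@[simp] lemma word_length (x : ℤ → Bool) (a : ℤ) (n : ℕ) : (word x a n).length = n := by
  simp [word]

lemma word_getElem (x : ℤ → Bool) (a : ℤ) (n : ℕ) (i : ℕ) (h : i < (word x a n).length) :
    (word x a n)[i] = x (a + i) := by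
  simp [word]

lemma flatten_ofFn_length {N l : ℕ} (g : Fin N → List Bool) (hl : ∀ i, (g i).length = l) :
    (List.ofFn g).flatten.length = N * l := by
  induction N with
  | zero => simp
  | succ n ih =>
    rw [List.ofFn_succ, List.flatten_cons, List.length_append, hl,
      ih (fun i => g i.succ) (fun i => hl i.succ)]
    ring

lemma flatten_ofFn_getElem {l : ℕ} : ∀ {N : ℕ} (g : Fin N → List Bool)
    (hl : ∀ i, (g i).length = l)
    (k i : ℕ) (hk : k < N) (hi : i < l) (h : k * l + i < (List.ofFn g).flatten.length),
    (List.ofFn g).flatten[k * l + i] = (g ⟨k, hk⟩)[i]'(by rw [hl]; exact hi)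
  | 0, g, hl, k, i, hk, hi, h => by omega
  | n + 1, g, hl, k, i, hk, hi, h => by
    have heq : (List.ofFn g).flatten = g 0 ++ (List.ofFn fun i => g i.succ).flatten := by
      rw [List.ofFn_succ, List.flatten_cons]
    have hlen0 : (g 0).length = l := hl 0
    have htail : (List.ofFn fun i => g i.succ).flatten.length = n * l :=
      flatten_ofFn_length _ (fun i => hl i.succ)
    have hfull : (List.ofFn g).flatten.length = (n + 1) * l := flatten_ofFn_length g hl
    rw [List.getElem_of_eq heq]
    rcases Nat.eq_zero_or_pos k with rfl | hkpos
    · rw [List.getElem_append_left (by omega)]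
      exact getElem_idx_congr _ (by omega) _
    · obtain ⟨k', rfl⟩ := Nat.exists_eq_add_of_le hkpos
      have hk' : k' < n := by
        by_contra hc
        have : n + 1 ≤ 1 + k' := by omega
        have := Nat.mul_le_mul_right l this
        omega
      have h2 : k' * l + i < (List.ofFn fun i => g i.succ).flatten.length := by
        rw [htail]
        have : k' + 1 ≤ n := hk'
        have := Nat.mul_le_mul_right l this
        nlinarith
      rw [List.getElem_append_right (by nlinarith)]
      rw [getElem_idx_congr _ (show (1 + k') * l + i - (g 0).length = k' * l + i by
        rw [hlen0]; ring_nf; omega)]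
      rw [flatten_ofFn_getElem (fun i => g i.succ) (fun i => hl i.succ) k' i hk' hi h2]
      congr 2
      ext
      simp [Fin.succ]
      omega

/-- Extracting the `k`-th block of length `l` from a word equal to a flattening. -/
lemma word_seg {x : ℤ → Bool} {a : ℤ} {N l : ℕ} {g : Fin N → List Bool}
    (hl : ∀ i, (g i).length = l) (hw : word x a (N * l) = (List.ofFn g).flatten)
    (k : ℕ) (hk : k < N) :
    word x (a + k * l) l = g ⟨k, hk⟩ := by
  apply List.ext_getElem
  · rw [word_length, hl]
  · intro i h1 h2
    rw [word_getElem]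
    have hi : i < l := by rwa [word_length] at h1
    have hkl : k * l + i < (List.ofFn g).flatten.length := by
      rw [flatten_ofFn_length g hl]
      calc k * l + i < k * l + l := by omega
        _ = (k + 1) * l := by ring
        _ ≤ N * l := Nat.mul_le_mul_right l (by omega)
    calc x (a + k * l + i) = x (a + (k * l + i : ℕ)) := by push_cast; ring_nf
      _ = (word x a (N * l))[k * l + i]'(by rw [word_length, ← flatten_ofFn_length g hl]; exact hkl) :=
          (word_getElem _ _ _ _ _).symm
      _ = (List.ofFn g).flatten[k * l + i] := List.getElem_of_eq hw _
      _ = _ := flatten_ofFn_getElem g hl k i hk hi hkl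


lemma lseq_one (l1 : ℕ) : lseq l1 1 = l1 := rfl
lemma Nseq_one (l1 : ℕ) : Nseq l1 1 = 2 ^ Nat.sqrt l1 := rfl

lemma lseq_succ (l1 j : ℕ) (hj : 1 ≤ j) : lseq l1 (j + 1) = lseq l1 j * Nseq l1 j := by
  obtain ⟨j', rfl⟩ : ∃ j', j = j' + 1 := ⟨j - 1, by omega⟩
  rfl

lemma Nseq_succ (l1 j : ℕ) (hj : 1 ≤ j) :
    Nseq l1 (j + 1) = Nat.factorial (Nat.sqrt (Nseq l1 j)) := by
  obtain ⟨j', rfl⟩ : ∃ j', j = j' + 1 := ⟨j - 1, by omega⟩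
  rfl

lemma Nseq_pos (l1 j : ℕ) (hj : 1 ≤ j) : 0 < Nseq l1 j := by
  induction j with
  | zero => omega
  | succ n ih =>
    rcases Nat.eq_zero_or_pos n with rfl | hn
    · rw [Nseq_one]; positivity
    · rw [Nseq_succ l1 n hn]; exact Nat.factorial_pos _

lemma lseq_pos (l1 : ℕ) (h1 : 0 < l1) (j : ℕ) (hj : 1 ≤ j) : 0 < lseq l1 j := by
  induction j with
  | zero => omega
  | succ n ih =>
    rcases Nat.eq_zero_or_pos n with rfl | hn
    · rwa [lseq_one]
    · rw [lseq_succ l1 n hn]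
      exact Nat.mul_pos (ih hn) (Nseq_pos l1 n hn)

/-- `x` decomposes into `C j` words with offset `t`. -/
def IsDec (c : Construction) (j t : ℕ) (x : ℤ → Bool) : Prop :=
  ∀ m : ℤ, (List.ofFn fun i : Fin (lseq c.l1 j) =>
    x (m * (lseq c.l1 j : ℤ) - (t : ℤ) + ((i : ℕ) : ℤ))) ∈ c.C j

lemma isDec_word (c : Construction) {j t : ℕ} {x : ℤ → Bool} (h : IsDec c j t x) (m : ℤ) :
    word x (m * (lseq c.l1 j : ℤ) - (t : ℤ)) (lseq c.l1 j) ∈ c.C j := h m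

lemma tOffset_eq (c : Construction) (j : ℕ) (x : ℤ → Bool) :
    c.tOffset j x = sInf { t : ℕ | t < lseq c.l1 j ∧ IsDec c j t x } := rfl

/-- Block structure: within each `C (j+1)` block of the decomposition, the `C j` sub-blocks
are given by a permutation as in `mem_succ`. -/
lemma blockStructure (c : Construction) {j t : ℕ} (hj : 1 ≤ j) {x : ℤ → Bool}
    (h : IsDec c (j + 1) t x) (M : ℤ) :
    ∃ τ : Equiv.Perm (Fin (c.C j).length),
      (∀ i : Fin (c.C j).length, ¬ PermutedIdx (Nseq c.l1 j) ((i : ℕ) + 1) → τ i = i) ∧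
      (∀ k : ℕ, ∀ hk : k < (c.C j).length,
        word x (M * (lseq c.l1 (j+1) : ℤ) - (t : ℤ) + k * (lseq c.l1 j : ℤ)) (lseq c.l1 j)
          = (c.C j).get (τ ⟨k, hk⟩)) := by
  have hw : word x (M * (lseq c.l1 (j+1) : ℤ) - (t : ℤ)) (lseq c.l1 (j+1)) ∈ c.C (j+1) :=
    isDec_word c h M
  rw [c.mem_succ j hj] at hw
  obtain ⟨τ, hfix, _, heq⟩ := hw
  refine ⟨τ, hfix, fun k hk => ?_⟩
  have hlen : ∀ i : Fin (c.C j).length, ((c.C j).get (τ i)).length = lseq c.l1 j :=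
    fun i => c.wordLength j hj _ (List.get_eq_getElem ▸ List.getElem_mem _)
  have hN : (c.C j).length = Nseq c.l1 j := c.length_eq j hj
  have hmul : lseq c.l1 (j + 1) = (c.C j).length * lseq c.l1 j := by
    rw [lseq_succ c.l1 j hj, hN, Nat.mul_comm]
  have hw2 : word x (M * (lseq c.l1 (j+1) : ℤ) - (t : ℤ)) ((c.C j).length * lseq c.l1 j)
      = (List.ofFn fun i : Fin (c.C j).length => (c.C j).get (τ i)).flatten := by
    rw [← hmul]; exact heq
  exact word_seg hlen hw2 k hk

/-- Dropping down one level: a `C (j+1)` decomposition induces a `C j` decomposition. -/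
lemma isDec_drop (c : Construction) (h1 : 0 < c.l1) {j t : ℕ} (hj : 1 ≤ j) {x : ℤ → Bool}
    (h : IsDec c (j + 1) t x) : IsDec c j (t % lseq c.l1 j) x := by
  intro m
  set l := lseq c.l1 j with hl
  set N := Nseq c.l1 j with hNd
  have hlpos : 0 < l := lseq_pos c.l1 h1 j hj
  have hNpos : 0 < N := Nseq_pos c.l1 j hj
  have hN : (c.C j).length = N := c.length_eq j hj
  set q : ℕ := t / l with hq
  set s : ℤ := m + q with hs
  set M : ℤ := s / N with hM
  set k : ℕ := (s % N).toNat with hk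
  have hk1 : (s % N : ℤ) = (k : ℤ) := by
    rw [hk, Int.toNat_of_nonneg (Int.emod_nonneg s (by exact_mod_cast hNpos.ne'))]
  have hkN : k < N := by
    have := Int.emod_lt_of_pos s (show (0:ℤ) < N by exact_mod_cast hNpos)
    omega
  obtain ⟨τ, hfix, hblocks⟩ := blockStructure c hj h M
  have key := hblocks k (by omega)
  have harith : M * (lseq c.l1 (j+1) : ℤ) - (t : ℤ) + k * (l : ℤ)
      = m * (l : ℤ) - ((t % l : ℕ) : ℤ) := by
    have hnat : q * l + t % l = t := by rw [hq]; exact Nat.div_add_mod' t l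
    have h1 : (t : ℤ) = (q : ℤ) * (l : ℤ) + ((t % l : ℕ) : ℤ) := by exact_mod_cast hnat.symm
    have h2 : s = M * N + k := by
      rw [hM, ← hk1]
      have := Int.mul_ediv_add_emod s (N : ℤ)
      linarith
    have h3 : (lseq c.l1 (j+1) : ℤ) = (l : ℤ) * N := by
      rw [lseq_succ c.l1 j hj]; push_cast; rfl
    have hm : m = M * N + k - q := by rw [← h2, hs]; ring
    rw [h3, hm, h1]
    ring
  rw [harith] at key
  have : word x (m * (l : ℤ) - ((t % l : ℕ) : ℤ)) l ∈ c.C j := by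
    rw [key]; exact List.get_eq_getElem ▸ List.getElem_mem _
  exact this



lemma block01 (mc : MarkerConstruction) {w : List Bool} (h : w ∈ mc.C 1) :
    ∃ s, w = false :: false :: true :: s := by
  obtain ⟨s, hs⟩ := mc.marker_prefix w h
  exact ⟨s, hs.symm⟩

lemma marker001 (mc : MarkerConstruction) {t' : ℕ} {x : ℤ → Bool}
    (h : IsDec mc.toConstruction 1 t' x) {p : ℤ}
    (h0 : x p = false) (h1 : x (p + 1) = false) (h2 : x (p + 2) = true) :
    ∃ M : ℤ, p + t' = M * mc.l1 := by
  set l := mc.l1 with hldef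
  have hblock : ∀ m : ℤ, ∃ s, word x (m * (l : ℤ) - t') l = false :: false :: true :: s := by
    intro m
    exact block01 mc (isDec_word _ h m)
  have hl3 : 3 ≤ l := by
    obtain ⟨s, hs⟩ := hblock 0
    have := congrArg List.length hs
    simp at this
    omega
  have hlZ : (0 : ℤ) < l := by exact_mod_cast (by omega : 0 < l)
  set M : ℤ := (p + t') / l with hMdef
  set iZ : ℤ := (p + t') % l with hiZdef
  have hi0 : 0 ≤ iZ := Int.emod_nonneg _ (by omega)
  have hil : iZ < l := Int.emod_lt_of_pos _ hlZ
  have hpM : (l : ℤ) * M + iZ = p + t' := Int.mul_ediv_add_emod (p + t') l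
  set i : ℕ := iZ.toNat with hidef
  have hiZ : (i : ℤ) = iZ := Int.toNat_of_nonneg hi0
  have hiln : i < l := by omega
  have hcomm : M * (l : ℤ) = (l : ℤ) * M := by ring
  by_cases hcase : i + 2 < l
  · -- interior case
    have hmem : word x (M * (l : ℤ) - t') l ∈ mc.C 1 := isDec_word _ h M
    have hwl : (word x (M * (l : ℤ) - t') l).length = l := word_length _ _ _
    have e0 : (word x (M * (l : ℤ) - t') l)[i]'(by omega) = false := by
      rw [word_getElem]
      have harg : M * (l : ℤ) - t' + i = p := by linarith
      rw [harg, h0]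
    have e1 : (word x (M * (l : ℤ) - t') l)[i + 1]'(by omega) = false := by
      rw [word_getElem]
      have harg : M * (l : ℤ) - t' + (i + 1 : ℕ) = p + 1 := by push_cast; linarith
      rw [harg, h1]
    have hdrop : [false, false] <+: (word x (M * (l : ℤ) - t') l).drop i := by
      refine ⟨(word x (M * (l : ℤ) - t') l).drop (i + 2), ?_⟩
      conv_rhs => rw [List.drop_eq_getElem_cons (show i < (word x (M * (l:ℤ) - t') l).length by omega),
        List.drop_eq_getElem_cons (show i + 1 < (word x (M * (l:ℤ) - t') l).length by omega)]
      simp [e0, e1]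
    have hi0' : i = 0 := mc.marker_unique _ hmem i hdrop
    exact ⟨M, by omega⟩
  · -- boundary case: contradiction
    exfalso
    obtain ⟨s, hs⟩ := hblock (M + 1)
    have hwl : (word x ((M + 1) * (l : ℤ) - t') l).length = l := word_length _ _ _
    obtain ⟨j, hjdef⟩ : ∃ j : ℕ, j = i + 2 - l := ⟨_, rfl⟩
    have hj1 : j ≤ 1 := by omega
    have hjl : j < l := by omega
    have expand : (M + 1) * (l : ℤ) = (l : ℤ) * M + l := by ring
    have harg : (M + 1) * (l : ℤ) - t' + (j : ℕ) = p + 2 := by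
      have hjcast : ((j : ℕ) : ℤ) = (i : ℤ) + 2 - l := by
        rw [hjdef]
        push_cast [Nat.cast_sub (show l ≤ i + 2 by omega)]
        ring
      rw [expand, hjcast]
      linarith
    have hval : (word x ((M + 1) * (l : ℤ) - t') l)[j]'(by omega) = true := by
      rw [word_getElem, harg, h2]
    have hfalse : (word x ((M + 1) * (l : ℤ) - t') l)[j]'(by omega) = false := by
      rw [List.getElem_of_eq hs]
      rcases (by omega : j = 0 ∨ j = 1) with hj | hj <;> subst hj <;> rfl
    rw [hval] at hfalse
    simp at hfalse

lemma unique_base (mc : MarkerConstruction) {t t' : ℕ} {x : ℤ → Bool}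
    (ht : t < mc.l1) (ht' : t' < mc.l1)
    (hd : IsDec mc.toConstruction 1 t x) (hd' : IsDec mc.toConstruction 1 t' x) : t = t' := by
  obtain ⟨s, hs⟩ := block01 mc (isDec_word _ hd 0)
  have hlen : (word x (0 * ((lseq mc.l1 1 : ℕ) : ℤ) - (t : ℤ)) (lseq mc.l1 1)).length = mc.l1 :=
    word_length _ _ _
  have hl3 : 3 ≤ mc.l1 := by
    have := congrArg List.length hs
    rw [hlen] at this
    simp at this
    omega
  have key : ∀ n : ℕ, n < 3 →
      x (0 * ((lseq mc.l1 1 : ℕ) : ℤ) - (t : ℤ) + n) = [false, false, true].getD n true := by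
    intro n hn
    calc x (0 * ((lseq mc.l1 1 : ℕ) : ℤ) - (t : ℤ) + n)
        = (word x (0 * ((lseq mc.l1 1 : ℕ) : ℤ) - (t : ℤ)) (lseq mc.l1 1))[n]'(by omega) :=
          (word_getElem _ _ _ _ _).symm
      _ = (false :: false :: true :: s)[n]'(by simp; omega) := List.getElem_of_eq hs _
      _ = [false, false, true].getD n true := by
          rcases (by omega : n = 0 ∨ n = 1 ∨ n = 2) with h | h | h <;> subst h <;> rfl
  have h0 : x (0 * ((lseq mc.l1 1 : ℕ) : ℤ) - (t : ℤ)) = false := by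
    have := key 0 (by omega); simpa using this
  have h1 : x (0 * ((lseq mc.l1 1 : ℕ) : ℤ) - (t : ℤ) + 1) = false := by
    have := key 1 (by omega); simpa using this
  have h2 : x (0 * ((lseq mc.l1 1 : ℕ) : ℤ) - (t : ℤ) + 2) = true := by
    have := key 2 (by omega); simpa using this
  obtain ⟨M1, e1⟩ := marker001 mc hd h0 h1 h2
  obtain ⟨M2, e2⟩ := marker001 mc hd' h0 h1 h2
  have h3 : ((t' : ℤ) - t) = (M2 - M1) * mc.l1 := by
    rw [sub_mul]; linarith
  have hb1 : (t : ℤ) < mc.l1 := by exact_mod_cast ht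
  have hb2 : (t' : ℤ) < mc.l1 := by exact_mod_cast ht'
  have hb3 : (0 : ℤ) ≤ t := by positivity
  have hb4 : (0 : ℤ) ≤ t' := by positivity
  have hD : M2 - M1 = 0 := by
    rcases lt_trichotomy (M2 - M1) 0 with h | h | h
    · exfalso
      have : (M2 - M1) * (mc.l1 : ℤ) ≤ -1 * mc.l1 :=
        mul_le_mul_of_nonneg_right (by omega) (by omega)
      linarith
    · exact h
    · exfalso
      have : 1 * (mc.l1 : ℤ) ≤ (M2 - M1) * mc.l1 :=
        mul_le_mul_of_nonneg_right (by omega) (by omega)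
      linarith
  rw [hD, zero_mul] at h3
  omega



lemma not_permutedIdx_one (N : ℕ) : ¬ PermutedIdx N 1 := by
  rintro (h | ⟨m, hm2, hmN, hm⟩)
  · omega
  · nlinarith

open Classical in
lemma exists_good (N e : ℕ) (hN : 2 * Nat.sqrt N < N) (he : e ≤ N) :
    ∃ a, a < N ∧ ¬ PermutedIdx N (a + 1) ∧ ¬ PermutedIdx N ((a + (N - e)) % N + 1) := by
  have hNpos : 0 < N := by omega
  set Pf := (Finset.range N).filter (fun a => PermutedIdx N (a + 1)) with hPf
  have hsq2 : Nat.sqrt 2 = 1 := by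
    have h1 : 1 ≤ Nat.sqrt 2 := Nat.le_sqrt.mpr (by norm_num)
    have h2 : Nat.sqrt 2 < 2 := Nat.sqrt_lt'.mpr (by norm_num)
    omega
  have hcard : Pf.card ≤ Nat.sqrt N := by
    have hsub : ∀ a ∈ Pf, Nat.sqrt (a + 1) ∈ Finset.Icc 1 (Nat.sqrt N) := by
      intro a ha
      rw [hPf, Finset.mem_filter] at ha
      rcases ha.2 with h | ⟨m, hm2, hmN, hm⟩
      · rw [h, hsq2]
        simp
        exact Nat.sqrt_pos.mpr hNpos
      · rw [hm, pow_two, Nat.sqrt_eq m]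
        simp
        omega
    have hinj : ∀ a ∈ Pf, ∀ b ∈ Pf, Nat.sqrt (a + 1) = Nat.sqrt (b + 1) → a = b := by
      intro a ha b hb hab
      rw [hPf, Finset.mem_filter] at ha hb
      rcases ha.2 with h | ⟨m, hm2, hmN, hm⟩ <;> rcases hb.2 with h' | ⟨m', hm2', hmN', hm'⟩
      · omega
      · rw [h, hsq2, hm', pow_two, Nat.sqrt_eq m'] at hab
        omega
      · rw [h', hsq2, hm, pow_two, Nat.sqrt_eq m] at hab
        omega
      · rw [hm, pow_two, Nat.sqrt_eq m, hm', pow_two, Nat.sqrt_eq m'] at hab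
        subst hab
        omega
    calc Pf.card ≤ (Finset.Icc 1 (Nat.sqrt N)).card := Finset.card_le_card_of_injOn _ hsub hinj
      _ = Nat.sqrt N := by rw [Nat.card_Icc]; omega
  set Bad := Pf ∪ Pf.image (fun b => (b + e) % N) with hBad
  have hBadCard : Bad.card < N := by
    calc Bad.card ≤ Pf.card + (Pf.image (fun b => (b + e) % N)).card := Finset.card_union_le _ _
      _ ≤ Pf.card + Pf.card := by
          have := Finset.card_image_le (s := Pf) (f := fun b => (b + e) % N)
          omega
      _ < N := by omega
  have hex : (Finset.range N \ Bad).Nonempty := by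
    rw [← Finset.card_pos]
    have h1 := Finset.le_card_sdiff Bad (Finset.range N)
    rw [Finset.card_range] at h1
    omega
  obtain ⟨a, ha⟩ := hex
  rw [Finset.mem_sdiff, Finset.mem_range] at ha
  obtain ⟨haN, haBad⟩ := ha
  refine ⟨a, haN, ?_, ?_⟩
  · intro hP
    exact haBad (Finset.mem_union_left _ (Finset.mem_filter.mpr ⟨Finset.mem_range.mpr haN, hP⟩))
  · intro hP
    set k := (a + (N - e)) % N with hk
    have hkN : k < N := Nat.mod_lt _ hNpos
    have hkPf : k ∈ Pf := Finset.mem_filter.mpr ⟨Finset.mem_range.mpr hkN, hP⟩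
    have himg : (k + e) % N = a := by
      rw [hk, Nat.mod_add_mod, show a + (N - e) + e = a + N by omega,
        Nat.add_mod_right, Nat.mod_eq_of_lt haN]
    exact haBad (Finset.mem_union_right _ (Finset.mem_image.mpr ⟨k, hkPf, himg⟩))

theorem unique_offset (mc : MarkerConstruction)
    (hbig : ∀ j, 1 ≤ j → 2 * Nat.sqrt (Nseq mc.l1 j) < Nseq mc.l1 j) :
    ∀ j, 1 ≤ j → ∀ t t' : ℕ, ∀ x : ℤ → Bool, t < lseq mc.l1 j → t' < lseq mc.l1 j →
      IsDec mc.toConstruction j t x → IsDec mc.toConstruction j t' x → t = t' := by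
  intro j hj
  induction j, hj using Nat.le_induction with
  | base =>
    intro t t' x ht ht' hd hd'
    exact unique_base mc ht ht' hd hd'
  | succ j hj ih =>
    intro t t' x ht ht' hd hd'
    have hlpos : 0 < lseq mc.l1 j := lseq_pos mc.l1 mc.hl1 j hj
    have hNpos : 0 < Nseq mc.l1 j := Nseq_pos mc.l1 j hj
    have hN : (mc.C j).length = Nseq mc.l1 j := mc.length_eq j hj
    have hll : lseq mc.l1 (j + 1) = lseq mc.l1 j * Nseq mc.l1 j := lseq_succ mc.l1 j hj
    have main : ∀ t t' : ℕ, t < lseq mc.l1 (j + 1) → t' < lseq mc.l1 (j + 1) → t' ≤ t →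
        IsDec mc.toConstruction (j + 1) t x → IsDec mc.toConstruction (j + 1) t' x → t = t' := by
      clear ht ht' hd hd' t t'
      intro t t' ht ht' hle hd hd'
      have hd1 := isDec_drop mc.toConstruction mc.hl1 hj hd
      have hd2 := isDec_drop mc.toConstruction mc.hl1 hj hd'
      have hmod : t % lseq mc.l1 j = t' % lseq mc.l1 j :=
        ih _ _ x (Nat.mod_lt _ hlpos) (Nat.mod_lt _ hlpos) hd1 hd2
      have hdvd : lseq mc.l1 j ∣ t - t' :=
        Nat.dvd_of_mod_eq_zero (Nat.sub_mod_eq_zero_of_mod_eq hmod)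
      obtain ⟨e, hdiff⟩ : ∃ e, t - t' = e * lseq mc.l1 j := by
        obtain ⟨e, hee⟩ := hdvd
        exact ⟨e, by rw [hee]; ring⟩
      have he : e < Nseq mc.l1 j := by
        by_contra hc
        have h1 : Nseq mc.l1 j * lseq mc.l1 j ≤ e * lseq mc.l1 j :=
          Nat.mul_le_mul_right _ (by omega)
        have h2 : lseq mc.l1 j * Nseq mc.l1 j = Nseq mc.l1 j * lseq mc.l1 j := Nat.mul_comm _ _
        rw [hll] at ht
        omega
      obtain ⟨a, haN, hPa, hPk⟩ := exists_good (Nseq mc.l1 j) e (hbig j hj) (by omega)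
      have hkN : (a + (Nseq mc.l1 j - e)) % Nseq mc.l1 j < Nseq mc.l1 j := Nat.mod_lt _ hNpos
      have hteq : t = t' + e * lseq mc.l1 j := by omega
      have htZ : (t : ℤ) = (t' : ℤ) + (e : ℤ) * (lseq mc.l1 j : ℤ) := by exact_mod_cast hteq
      have hLZ : ((lseq mc.l1 (j + 1) : ℕ) : ℤ)
          = (lseq mc.l1 j : ℤ) * (Nseq mc.l1 j : ℤ) := by rw [hll]; push_cast; ring
      obtain ⟨τ, hfix, hb⟩ := blockStructure mc.toConstruction hj hd 0
      have hfa : τ ⟨a, by omega⟩ = ⟨a, by omega⟩ := hfix ⟨a, by omega⟩ hPa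
      have wa : word x (0 * ((lseq mc.l1 (j+1) : ℕ) : ℤ) - (t : ℤ) + (a : ℕ) * (lseq mc.l1 j : ℤ))
            (lseq mc.l1 j) = (mc.C j).get ⟨a, by omega⟩ := by
        have h5 := hb a (by omega)
        rwa [hfa] at h5
      have hkcase : (e ≤ a ∧ (a + (Nseq mc.l1 j - e)) % Nseq mc.l1 j = a - e)
          ∨ (a < e ∧ (a + (Nseq mc.l1 j - e)) % Nseq mc.l1 j = a + (Nseq mc.l1 j - e)) := by
        rcases le_or_gt e a with hc | hc
        · left
          refine ⟨hc, ?_⟩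
          rw [show a + (Nseq mc.l1 j - e) = (a - e) + Nseq mc.l1 j by omega, Nat.add_mod_right,
            Nat.mod_eq_of_lt (by omega)]
        · right
          exact ⟨hc, Nat.mod_eq_of_lt (by omega)⟩
      rcases hkcase with ⟨hc, hk⟩ | ⟨hc, hk⟩
      · -- same C_{j+1}-block, M' = 0
        rw [hk] at hPk hkN
        obtain ⟨τ', hfix', hb'⟩ := blockStructure mc.toConstruction hj hd' 0
        have hfk : τ' ⟨a - e, by omega⟩ = ⟨a - e, by omega⟩ := hfix' ⟨a - e, by omega⟩ hPk
        have wk : word x (0 * ((lseq mc.l1 (j+1) : ℕ) : ℤ) - (t' : ℤ)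
              + ((a - e : ℕ) : ℤ) * (lseq mc.l1 j : ℤ)) (lseq mc.l1 j)
            = (mc.C j).get ⟨a - e, by omega⟩ := by
          have h5 := hb' (a - e) (by omega)
          rwa [hfk] at h5
        have harg : 0 * ((lseq mc.l1 (j+1) : ℕ) : ℤ) - (t : ℤ) + (a : ℕ) * (lseq mc.l1 j : ℤ)
            = 0 * ((lseq mc.l1 (j+1) : ℕ) : ℤ) - (t' : ℤ)
              + ((a - e : ℕ) : ℤ) * (lseq mc.l1 j : ℤ) := by
          have hkZ : ((a - e : ℕ) : ℤ) = (a : ℤ) - (e : ℤ) := by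
            push_cast [Nat.cast_sub hc]; ring
          rw [hkZ, htZ]
          ring
        have hgeteq : (mc.C j).get ⟨a, by omega⟩ = (mc.C j).get ⟨a - e, by omega⟩ := by
          calc (mc.C j).get ⟨a, by omega⟩
              = word x (0 * ((lseq mc.l1 (j+1) : ℕ) : ℤ) - (t : ℤ)
                  + (a : ℕ) * (lseq mc.l1 j : ℤ)) (lseq mc.l1 j) := wa.symm
            _ = word x (0 * ((lseq mc.l1 (j+1) : ℕ) : ℤ) - (t' : ℤ)
                  + ((a - e : ℕ) : ℤ) * (lseq mc.l1 j : ℤ)) (lseq mc.l1 j) := by rw [harg]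
            _ = (mc.C j).get ⟨a - e, by omega⟩ := wk
        have h6 := List.nodup_iff_injective_get.mp (mc.nodup j hj) hgeteq
        have hak : a = a - e := congrArg Fin.val h6
        have he0 : e = 0 := by omega
        subst he0
        simp at hdiff
        omega
      · -- adjacent C_{j+1}-block, M' = -1
        rw [hk] at hPk hkN
        obtain ⟨τ', hfix', hb'⟩ := blockStructure mc.toConstruction hj hd' (-1)
        have hfk : τ' ⟨a + (Nseq mc.l1 j - e), by omega⟩ = ⟨a + (Nseq mc.l1 j - e), by omega⟩ :=
          hfix' ⟨a + (Nseq mc.l1 j - e), by omega⟩ hPk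
        have wk : word x ((-1) * ((lseq mc.l1 (j+1) : ℕ) : ℤ) - (t' : ℤ)
              + ((a + (Nseq mc.l1 j - e) : ℕ) : ℤ) * (lseq mc.l1 j : ℤ)) (lseq mc.l1 j)
            = (mc.C j).get ⟨a + (Nseq mc.l1 j - e), by omega⟩ := by
          have h5 := hb' (a + (Nseq mc.l1 j - e)) (by omega)
          rwa [hfk] at h5
        have harg : 0 * ((lseq mc.l1 (j+1) : ℕ) : ℤ) - (t : ℤ) + (a : ℕ) * (lseq mc.l1 j : ℤ)
            = (-1) * ((lseq mc.l1 (j+1) : ℕ) : ℤ) - (t' : ℤ)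
              + ((a + (Nseq mc.l1 j - e) : ℕ) : ℤ) * (lseq mc.l1 j : ℤ) := by
          have hkZ : ((a + (Nseq mc.l1 j - e) : ℕ) : ℤ)
              = (a : ℤ) + (Nseq mc.l1 j : ℤ) - (e : ℤ) := by
            push_cast [Nat.cast_sub (by omega : e ≤ Nseq mc.l1 j)]; ring
          rw [hkZ, htZ, hLZ]
          ring
        have hgeteq : (mc.C j).get ⟨a, by omega⟩
            = (mc.C j).get ⟨a + (Nseq mc.l1 j - e), by omega⟩ := by
          calc (mc.C j).get ⟨a, by omega⟩
              = word x (0 * ((lseq mc.l1 (j+1) : ℕ) : ℤ) - (t : ℤ)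
                  + (a : ℕ) * (lseq mc.l1 j : ℤ)) (lseq mc.l1 j) := wa.symm
            _ = word x ((-1) * ((lseq mc.l1 (j+1) : ℕ) : ℤ) - (t' : ℤ)
                  + ((a + (Nseq mc.l1 j - e) : ℕ) : ℤ) * (lseq mc.l1 j : ℤ)) (lseq mc.l1 j) := by
                rw [harg]
            _ = (mc.C j).get ⟨a + (Nseq mc.l1 j - e), by omega⟩ := wk
        have h6 := List.nodup_iff_injective_get.mp (mc.nodup j hj) hgeteq
        have hak : a = a + (Nseq mc.l1 j - e) := congrArg Fin.val h6
        omega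
    rcases le_total t' t with hle | hle
    · exact main t t' ht ht' hle hd hd'
    · exact (main t' t ht' ht hle hd' hd).symm



lemma fact_ge_pow4 : ∀ m : ℕ, 9 ≤ m → m ^ 4 ≤ m.factorial := by
  intro m hm
  induction m, hm using Nat.le_induction with
  | base => norm_num [Nat.factorial]
  | succ m hm ih =>
    have h1 : (m + 1) ^ 4 ≤ (m + 1) * m ^ 4 := by
      have : (m + 1) ^ 3 ≤ m ^ 4 := by
        calc (m + 1) ^ 3 ≤ (2 * m) ^ 3 := Nat.pow_le_pow_left (by omega) 3
          _ = 8 * m ^ 3 := by ring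
          _ ≤ m * m ^ 3 := Nat.mul_le_mul_right _ (by omega)
          _ = m ^ 4 := by ring
      calc (m + 1) ^ 4 = (m + 1) * (m + 1) ^ 3 := by ring
        _ ≤ (m + 1) * m ^ 4 := Nat.mul_le_mul_left _ this
    calc (m + 1) ^ 4 ≤ (m + 1) * m ^ 4 := h1
      _ ≤ (m + 1) * m.factorial := Nat.mul_le_mul_left _ ih
      _ = (m + 1).factorial := (Nat.factorial_succ m).symm

lemma growth (l1 : ℕ) (h : 10000 ≤ l1) : ∀ j, 1 ≤ j → 16 ^ (2 ^ j) ≤ Nseq l1 j := by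
  intro j hj
  induction j, hj using Nat.le_induction with
  | base =>
    have h100 : 100 ≤ Nat.sqrt l1 := by
      calc 100 = Nat.sqrt 10000 := by
            have h1 : 100 ≤ Nat.sqrt 10000 := Nat.le_sqrt.mpr (by norm_num)
            have h2 : Nat.sqrt 10000 * Nat.sqrt 10000 ≤ 10000 := Nat.sqrt_le 10000
            nlinarith
        _ ≤ Nat.sqrt l1 := Nat.sqrt_le_sqrt h
    rw [Nseq_one]
    calc (16 : ℕ) ^ 2 ^ 1 = 2 ^ 8 := by norm_num
      _ ≤ 2 ^ Nat.sqrt l1 := Nat.pow_le_pow_right (by norm_num) (by omega)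
  | succ j hj ih =>
    rw [Nseq_succ l1 j hj]
    have hm0 : 4 ^ (2 ^ j) ≤ Nat.sqrt (Nseq l1 j) := by
      apply Nat.le_sqrt.mpr
      calc 4 ^ 2 ^ j * 4 ^ 2 ^ j = (4 * 4) ^ 2 ^ j := by rw [mul_pow]
        _ = 16 ^ 2 ^ j := by norm_num
        _ ≤ Nseq l1 j := ih
    have hm016 : 16 ≤ 4 ^ (2 ^ j) := by
      calc (16 : ℕ) = 4 ^ 2 := by norm_num
        _ ≤ 4 ^ (2 ^ j) := Nat.pow_le_pow_right (by norm_num)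
            (by calc 2 = 2 ^ 1 := rfl
                  _ ≤ 2 ^ j := Nat.pow_le_pow_right (by norm_num) hj)
    have key : (16 : ℕ) ^ 2 ^ (j + 1) = (4 ^ (2 ^ j)) ^ 4 := by
      rw [show (16 : ℕ) = 4 ^ 2 by norm_num, ← pow_mul, ← pow_mul]
      congr 1
      rw [pow_succ]
      ring
    rw [key]
    calc (4 ^ 2 ^ j) ^ 4 ≤ (4 ^ 2 ^ j).factorial := fact_ge_pow4 _ (by omega)
      _ ≤ (Nat.sqrt (Nseq l1 j)).factorial := Nat.factorial_le hm0
      _ = Nat.factorial (Nat.sqrt (Nseq l1 j)) := rfl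

lemma Nseq_big (l1 : ℕ) (h : 10000 ≤ l1) (j : ℕ) (hj : 1 ≤ j) :
    2 * Nat.sqrt (Nseq l1 j) < Nseq l1 j := by
  have hg := growth l1 h j hj
  have h256 : 256 ≤ Nseq l1 j := by
    calc (256 : ℕ) = 16 ^ 2 ^ 1 := by norm_num
      _ ≤ 16 ^ 2 ^ j := Nat.pow_le_pow_right (by norm_num)
          (Nat.pow_le_pow_right (by norm_num) hj)
      _ ≤ Nseq l1 j := hg
  have hs : 16 ≤ Nat.sqrt (Nseq l1 j) := Nat.le_sqrt.mpr (by omega)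
  have hss : Nat.sqrt (Nseq l1 j) * Nat.sqrt (Nseq l1 j) ≤ Nseq l1 j := Nat.sqrt_le _
  nlinarith

lemma Nseq_sqrt_mul (l1 : ℕ) (h : 10000 ≤ l1) (j : ℕ) (hj : 1 ≤ j) :
    Nat.sqrt (Nseq l1 j) * 2 ^ j ≤ Nseq l1 j := by
  have hg := growth l1 h j hj
  have hm0 : 4 ^ (2 ^ j) ≤ Nat.sqrt (Nseq l1 j) := by
    apply Nat.le_sqrt.mpr
    calc 4 ^ 2 ^ j * 4 ^ 2 ^ j = (4 * 4) ^ 2 ^ j := by rw [mul_pow]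
      _ = 16 ^ 2 ^ j := by norm_num
      _ ≤ Nseq l1 j := hg
  have h2j : 2 ^ j ≤ Nat.sqrt (Nseq l1 j) := by
    calc 2 ^ j ≤ 2 ^ 2 ^ j := Nat.pow_le_pow_right (by norm_num) (Nat.lt_two_pow_self (n := j)).le
      _ ≤ 4 ^ 2 ^ j := Nat.pow_le_pow_left (by norm_num) _
      _ ≤ _ := hm0
  calc Nat.sqrt (Nseq l1 j) * 2 ^ j ≤ Nat.sqrt (Nseq l1 j) * Nat.sqrt (Nseq l1 j) :=
        Nat.mul_le_mul_left _ h2j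
    _ ≤ Nseq l1 j := Nat.sqrt_le _



open Classical in
lemma card_perm_le (N : ℕ) (hNpos : 0 < N) :
    ((Finset.range N).filter (fun a => PermutedIdx N (a + 1))).card ≤ Nat.sqrt N := by
  have hsq2 : Nat.sqrt 2 = 1 := by
    have h1 : 1 ≤ Nat.sqrt 2 := Nat.le_sqrt.mpr (by norm_num)
    have h2 : Nat.sqrt 2 < 2 := Nat.sqrt_lt'.mpr (by norm_num)
    omega
  have hsub : ∀ a ∈ (Finset.range N).filter (fun a => PermutedIdx N (a + 1)),
      Nat.sqrt (a + 1) ∈ Finset.Icc 1 (Nat.sqrt N) := by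
    intro a ha
    rw [Finset.mem_filter] at ha
    rcases ha.2 with h | ⟨m, hm2, hmN, hm⟩
    · rw [h, hsq2]
      simp
      exact Nat.sqrt_pos.mpr hNpos
    · rw [hm, pow_two, Nat.sqrt_eq m]
      simp
      omega
  have hinj : ∀ a ∈ (Finset.range N).filter (fun a => PermutedIdx N (a + 1)),
      ∀ b ∈ (Finset.range N).filter (fun a => PermutedIdx N (a + 1)),
      Nat.sqrt (a + 1) = Nat.sqrt (b + 1) → a = b := by
    intro a ha b hb hab
    rw [Finset.mem_filter] at ha hb
    rcases ha.2 with h | ⟨m, hm2, hmN, hm⟩ <;> rcases hb.2 with h' | ⟨m', hm2', hmN', hm'⟩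
    · omega
    · rw [h, hsq2, hm', pow_two, Nat.sqrt_eq m'] at hab
      omega
    · rw [h', hsq2, hm, pow_two, Nat.sqrt_eq m] at hab
      omega
    · rw [hm, pow_two, Nat.sqrt_eq m, hm', pow_two, Nat.sqrt_eq m'] at hab
      subst hab
      omega
  calc ((Finset.range N).filter (fun a => PermutedIdx N (a + 1))).card
      ≤ (Finset.Icc 1 (Nat.sqrt N)).card := Finset.card_le_card_of_injOn _ hsub hinj
    _ = Nat.sqrt N := by rw [Nat.card_Icc]; omega

lemma isDec_measurable (c : Construction) (j t : ℕ) :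
    MeasurableSet {x : ℤ → Bool | IsDec c j t x} := by
  have heq : {x : ℤ → Bool | IsDec c j t x} = ⋂ m : ℤ,
      (fun (x : ℤ → Bool) (i : Fin (lseq c.l1 j)) => x (m * (lseq c.l1 j : ℤ) - t + (i : ℕ)))
        ⁻¹' {v : Fin (lseq c.l1 j) → Bool | (List.ofFn v) ∈ c.C j} := by
    ext x
    simp only [Set.mem_setOf_eq, Set.mem_iInter, Set.mem_preimage]
    rfl
  rw [heq]
  refine MeasurableSet.iInter fun m => ?_
  exact (measurable_pi_lambda _ fun i => measurable_pi_apply _) (Set.toFinite _).measurableSet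

lemma shift_preimage_isDec (c : Construction) (j t : ℕ) :
    shift ⁻¹' {x : ℤ → Bool | IsDec c j (t + 1) x} = {x : ℤ → Bool | IsDec c j t x} := by
  ext x
  simp only [Set.mem_preimage, Set.mem_setOf_eq]
  have hw : ∀ m : ℤ, (List.ofFn fun i : Fin (lseq c.l1 j) =>
      shift x (m * (lseq c.l1 j : ℤ) - ((t + 1 : ℕ) : ℤ) + (i : ℕ)))
      = (List.ofFn fun i : Fin (lseq c.l1 j) =>
        x (m * (lseq c.l1 j : ℤ) - (t : ℤ) + (i : ℕ))) := by
    intro m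
    refine congrArg List.ofFn (funext fun i => ?_)
    show x (m * (lseq c.l1 j : ℤ) - ((t + 1 : ℕ) : ℤ) + (i : ℕ) + 1) = _
    congr 1
    push_cast
    ring
  constructor
  · intro h m
    have := h m
    rwa [hw m] at this
  · intro h m
    rw [hw m]
    exact h m

lemma measure_isDec_eq (c : Construction) {μ : Measure (ℤ → Bool)}
    (hshift : MeasurePreserving shift μ μ) (j : ℕ) (t : ℕ) :
    μ {x : ℤ → Bool | IsDec c j t x} = μ {x : ℤ → Bool | IsDec c j 0 x} := by
  induction t with
  | zero => rfl
  | succ t ih =>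
    rw [← ih, ← shift_preimage_isDec c j t]
    exact (hshift.measure_preimage (isDec_measurable c j (t + 1)).nullMeasurableSet).symm



/-- Marker variant with `l₁` large: for `μ`-a.e. `x`, the `C_j`-block of
`x` containing coordinate `0` is unpermuted for all sufficiently large `j`. -/
theorem statement12 :
    ∃ L : ℕ, ∀ c : MarkerConstruction, L ≤ c.l1 →
      ∀ μ : Measure (ℤ → Bool), IsInvProbOn μ c.toConstruction.space →
        ∀ᵐ x ∂μ, ∃ J : ℕ, ∀ j : ℕ, J ≤ j →
          ¬ PermutedIdx (Nseq c.l1 j)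
              (c.toConstruction.tOffset (j + 1) x / lseq c.l1 j + 1) := by
  classical
  refine ⟨10000, fun c hL μ hμ => ?_⟩
  obtain ⟨hprob, hshift, -⟩ := hμ
  haveI := hprob
  have hbig : ∀ j, 1 ≤ j → 2 * Nat.sqrt (Nseq c.l1 j) < Nseq c.l1 j :=
    fun j hj => Nseq_big c.l1 hL j hj
  set bad : ℕ → Set (ℤ → Bool) := fun j =>
    {x | PermutedIdx (Nseq c.l1 j) (c.toConstruction.tOffset (j + 1) x / lseq c.l1 j + 1)}
    with hbaddef
  have hbound : ∀ j : ℕ, μ (bad j) ≤ ((2 : ENNReal) ^ j)⁻¹ := by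
    intro j
    rcases Nat.eq_zero_or_pos j with rfl | hj
    · simpa using prob_le_one (μ := μ)
    have hlpos : 0 < lseq c.l1 j := lseq_pos c.l1 c.hl1 j hj
    have hNpos : 0 < Nseq c.l1 j := Nseq_pos c.l1 j hj
    have hll : lseq c.l1 (j + 1) = lseq c.l1 j * Nseq c.l1 j := lseq_succ c.l1 j hj
    set S : ℕ → Set (ℤ → Bool) := fun t => {x | IsDec c.toConstruction (j + 1) t x} with hS
    have hmeas : ∀ t, MeasurableSet (S t) := fun t => isDec_measurable _ _ _
    have hSeq : ∀ t, μ (S t) = μ (S 0) := fun t => measure_isDec_eq _ hshift _ t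
    have hdisj : (↑(Finset.range (lseq c.l1 (j + 1))) : Set ℕ).PairwiseDisjoint S := by
      intro t ht t' ht' hne
      refine Set.disjoint_left.mpr fun x hx hx' => hne ?_
      exact unique_offset c hbig (j + 1) (by omega) t t' x
        (by simpa using ht) (by simpa using ht') hx hx'
    have hsum1 : ((lseq c.l1 (j + 1) : ℕ) : ENNReal) * μ (S 0) ≤ 1 := by
      have h1 : μ (⋃ t ∈ Finset.range (lseq c.l1 (j + 1)), S t)
          = ∑ t ∈ Finset.range (lseq c.l1 (j + 1)), μ (S t) :=
        measure_biUnion_finset hdisj (fun t _ => hmeas t)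
      have h2 : ∑ t ∈ Finset.range (lseq c.l1 (j + 1)), μ (S t)
          = ((lseq c.l1 (j + 1) : ℕ) : ENNReal) * μ (S 0) := by
        simp_rw [hSeq]
        rw [Finset.sum_const, Finset.card_range, nsmul_eq_mul]
      rw [h2] at h1
      rw [← h1]
      exact prob_le_one
    set T := (Finset.range (lseq c.l1 (j + 1))).filter
      (fun t => PermutedIdx (Nseq c.l1 j) (t / lseq c.l1 j + 1)) with hT
    have hbadsub : bad j ⊆ ⋃ t ∈ T, S t := by
      intro x hx
      have hx' : PermutedIdx (Nseq c.l1 j)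
          (c.toConstruction.tOffset (j + 1) x / lseq c.l1 j + 1) := hx
      have hne : {t : ℕ | t < lseq c.l1 (j + 1) ∧ IsDec c.toConstruction (j + 1) t x}.Nonempty := by
        by_contra hcon
        rw [Set.not_nonempty_iff_eq_empty] at hcon
        have h0 : c.toConstruction.tOffset (j + 1) x = 0 := by
          rw [tOffset_eq, hcon, Nat.sInf_empty]
        rw [h0, Nat.zero_div] at hx'
        exact not_permutedIdx_one _ hx'
      have hmem : c.toConstruction.tOffset (j + 1) x ∈
          {t : ℕ | t < lseq c.l1 (j + 1) ∧ IsDec c.toConstruction (j + 1) t x} := by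
        rw [tOffset_eq]
        exact Nat.sInf_mem hne
      obtain ⟨h1, h2⟩ := hmem
      exact Set.mem_biUnion (Finset.mem_filter.mpr ⟨Finset.mem_range.mpr h1, hx'⟩) h2
    have hcardT : T.card ≤ Nat.sqrt (Nseq c.l1 j) * lseq c.l1 j := by
      have hmap : ∀ t ∈ T, (t / lseq c.l1 j, t % lseq c.l1 j) ∈
          ((Finset.range (Nseq c.l1 j)).filter
            (fun a => PermutedIdx (Nseq c.l1 j) (a + 1))) ×ˢ Finset.range (lseq c.l1 j) := by
        intro t ht
        rw [hT, Finset.mem_filter, Finset.mem_range] at ht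
        refine Finset.mem_product.mpr ⟨Finset.mem_filter.mpr ⟨Finset.mem_range.mpr ?_, ht.2⟩,
          Finset.mem_range.mpr (Nat.mod_lt _ hlpos)⟩
        apply (Nat.div_lt_iff_lt_mul hlpos).mpr
        have hcomm : lseq c.l1 j * Nseq c.l1 j = Nseq c.l1 j * lseq c.l1 j := Nat.mul_comm _ _
        have := ht.1
        rw [hll] at this
        omega
      have hinj2 : ∀ t ∈ T, ∀ t' ∈ T,
          (t / lseq c.l1 j, t % lseq c.l1 j) = (t' / lseq c.l1 j, t' % lseq c.l1 j) → t = t' := by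
        intro t _ t' _ h
        have h1 : t / lseq c.l1 j = t' / lseq c.l1 j := congrArg Prod.fst h
        have h2 : t % lseq c.l1 j = t' % lseq c.l1 j := congrArg Prod.snd h
        have e1 := Nat.div_add_mod t (lseq c.l1 j)
        have e2 := Nat.div_add_mod t' (lseq c.l1 j)
        rw [← e1, ← e2, h1, h2]
      calc T.card ≤ (((Finset.range (Nseq c.l1 j)).filter
            (fun a => PermutedIdx (Nseq c.l1 j) (a + 1))) ×ˢ Finset.range (lseq c.l1 j)).card :=
            Finset.card_le_card_of_injOn _ hmap hinj2
        _ = ((Finset.range (Nseq c.l1 j)).filter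
            (fun a => PermutedIdx (Nseq c.l1 j) (a + 1))).card * lseq c.l1 j := by
            rw [Finset.card_product, Finset.card_range]
        _ ≤ Nat.sqrt (Nseq c.l1 j) * lseq c.l1 j :=
            Nat.mul_le_mul_right _ (card_perm_le _ hNpos)
    have hb1 : μ (bad j) ≤ (T.card : ENNReal) * μ (S 0) := by
      calc μ (bad j) ≤ μ (⋃ t ∈ T, S t) := measure_mono hbadsub
        _ ≤ ∑ t ∈ T, μ (S t) := measure_biUnion_finset_le T S
        _ = (T.card : ENNReal) * μ (S 0) := by
            simp_rw [hSeq]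
            rw [Finset.sum_const, nsmul_eq_mul]
    rw [ENNReal.le_inv_iff_mul_le]
    have hnat : T.card * 2 ^ j ≤ lseq c.l1 (j + 1) := by
      calc T.card * 2 ^ j ≤ (Nat.sqrt (Nseq c.l1 j) * lseq c.l1 j) * 2 ^ j :=
            Nat.mul_le_mul_right _ hcardT
        _ = (Nat.sqrt (Nseq c.l1 j) * 2 ^ j) * lseq c.l1 j := by ring
        _ ≤ Nseq c.l1 j * lseq c.l1 j :=
            Nat.mul_le_mul_right _ (Nseq_sqrt_mul c.l1 hL j hj)
        _ = lseq c.l1 (j + 1) := by rw [hll, Nat.mul_comm]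
    calc μ (bad j) * 2 ^ j ≤ ((T.card : ENNReal) * μ (S 0)) * 2 ^ j := mul_le_mul_left hb1 _
      _ = ((T.card * 2 ^ j : ℕ) : ENNReal) * μ (S 0) := by push_cast; ring
      _ ≤ ((lseq c.l1 (j + 1) : ℕ) : ENNReal) * μ (S 0) :=
          mul_le_mul_left (by exact_mod_cast hnat) _
      _ ≤ 1 := hsum1
  have hsum : (∑' j, μ (bad j)) ≠ ⊤ := by
    refine ne_top_of_le_ne_top ?_ (ENNReal.tsum_le_tsum hbound)
    have : ∀ j : ℕ, ((2 : ENNReal) ^ j)⁻¹ = (2⁻¹ : ENNReal) ^ j := fun j => by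
      rw [ENNReal.inv_pow]
    simp_rw [this]
    rw [ENNReal.tsum_geometric, ENNReal.one_sub_inv_two, inv_inv]
    exact ENNReal.ofNat_ne_top
  have hae := MeasureTheory.ae_eventually_notMem hsum
  filter_upwards [hae] with x hx
  obtain ⟨J, hJ⟩ := Filter.eventually_atTop.mp hx
  exact ⟨J, fun j hj => hJ j hj⟩

end EntDim
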